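/- If r^{t+1} = (I - ηK)r^t with K block-structured, then the global mean satisfies ⟨r^{t+1}⟩ = (1 - ηλ_global)⟨r^t⟩ and the individual deviations satisfy r^{t+1}_i - ⟨r^{t+1}⟩_c = (1 - ηλ_single)(r^t_i - ⟨r^t⟩_c) for every sample i in class c, where λ_global = (γ_d - γ_c) + m(γ_c - γ_n) + Nγ_n and λ_single = γ_d - γ_c. -/

import Mathlib

open Matrix

/-- If `r' = (I - η K) r` with `K` block-structured, then the global mean satisfies
`⟨r'⟩ = (1 - η λ_global) ⟨r⟩`, and for every sample `(c, i)` the individual deviation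
satisfies `r'_(c,i) - ⟨r'⟩_c = (1 - η λ_single) (r_(c,i) - ⟨r⟩_c)`, where
`λ_global = (γd - γc) + m (γc - γn) + N γn` and `λ_single = γd - γc`. -/
theorem stmt_6 (C m : ℕ) (hC : 0 < C) (hm : 0 < m) (η γd γc γn : ℝ)
    (K : Matrix (Fin C × Fin m) (Fin C × Fin m) ℝ)
    (hK : ∀ i j, K i j = if i = j then γd else if i.1 = j.1 then γc else γn)
    (r r' : Fin C × Fin m → ℝ)
    (hr : r' = (1 - η • K).mulVec r) :
    ((∑ j, r' j) / ((m : ℝ) * C) =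
        (1 - η * ((γd - γc) + (m : ℝ) * (γc - γn) + ((m : ℝ) * (C : ℝ)) * γn)) *
          ((∑ j, r j) / ((m : ℝ) * C))) ∧
    (∀ (c : Fin C) (i : Fin m),
      r' (c, i) - (∑ i', r' (c, i')) / m =
        (1 - η * (γd - γc)) * (r (c, i) - (∑ i', r (c, i')) / m)) := by
  set T : ℝ := ∑ j, r j with hT
  set S : Fin C → ℝ := fun c => ∑ i', r (c, i') with hS
  have key : ∀ x : Fin C × Fin m, r' x =
      r x - η * ((γd - γc) * r x + (γc - γn) * S x.1 + γn * T) := by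
    intro x
    have hrow : ∀ j, K x j * r j =
        γn * r j + (if x.1 = j.1 then (γc - γn) else 0) * r j
          + (if x = j then (γd - γc) else 0) * r j := by
      intro j
      rw [hK]
      by_cases h1 : x = j
      · simp [h1]; ring
      · by_cases h2 : x.1 = j.1 <;> simp [h1, h2] <;> ring
    have hsum : ∑ j, K x j * r j =
        γn * T + (γc - γn) * S x.1 + (γd - γc) * r x := by
      simp only [hrow]
      rw [Finset.sum_add_distrib, Finset.sum_add_distrib]
      congr 1
      · congr 1
        · rw [← Finset.mul_sum]
        · rw [Fintype.sum_prod_type]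
          rw [Finset.sum_eq_single x.1]
          · simp [hS, Finset.mul_sum]
          · intro b _ hb
            simp [Ne.symm hb]
          · simp
      · rw [Finset.sum_eq_single x]
        · simp
        · intro b _ hb; simp [Ne.symm hb]
        · simp
    have hmv : (1 - η • K).mulVec r x = r x - η * ∑ j, K x j * r j := by
      simp [mulVec, dotProduct, Matrix.sub_apply, one_apply, Matrix.smul_apply, sub_mul, ite_mul,
        Finset.sum_sub_distrib, smul_eq_mul, mul_assoc, ← Finset.mul_sum]
    rw [hr, hmv, hsum]
    ring
  have hmC : (0:ℝ) < (m : ℝ) * C := by positivity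
  constructor
  · have hsum' : ∑ j, r' j =
        (1 - η * ((γd - γc) + (m : ℝ) * (γc - γn) + ((m : ℝ) * (C : ℝ)) * γn)) * T := by
      simp only [key]
      rw [Finset.sum_sub_distrib, ← Finset.mul_sum]
      have h1 : ∑ x : Fin C × Fin m, ((γd - γc) * r x + (γc - γn) * S x.1 + γn * T)
          = (γd - γc) * T + (γc - γn) * ((m : ℝ) * T) + γn * (((m : ℝ) * C) * T) := by
        rw [Finset.sum_add_distrib, Finset.sum_add_distrib]
        congr 1
        · congr 1
          · rw [← Finset.mul_sum]
          · rw [← Finset.mul_sum, Fintype.sum_prod_type]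
            have : ∑ c : Fin C, ∑ _i : Fin m, S c = (m : ℝ) * T := by
              simp [Finset.sum_const, hT, hS, Fintype.sum_prod_type, Finset.mul_sum]
            rw [this]
        · simp [Finset.sum_const, Finset.card_univ]
          ring
      rw [h1]; ring
    rw [hsum', mul_div_assoc]
  · intro c i
    have hSc : ∑ i', r' (c, i') =
        S c - η * ((γd - γc) * S c + (γc - γn) * ((m : ℝ) * S c) + γn * ((m : ℝ) * T)) := by
      simp only [key]
      rw [Finset.sum_sub_distrib, ← Finset.mul_sum]
      congr 2
      rw [Finset.sum_add_distrib, Finset.sum_add_distrib, ← Finset.mul_sum]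
      simp [Finset.sum_const, Finset.card_univ, hS]
      ring
    have hm' : (m : ℝ) ≠ 0 := by positivity
    rw [key, hSc]
    field_simp
    ring
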